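/- Let G(z) be a 2×2 matrix-valued function meromorphic on ℂ \ ℝ with only simple poles, continuous up to ℝ from both sides with G₊ = G₋ on ℝ, such that at each pole z₀ the residue satisfies Res_{z₀} G = lim_{z→z₀} G(z) · N for a nilpotent constant matrix N (either strictly lower or strictly upper triangular). Then det G(z) extends to an entire function; if moreover G(z) → I as z → ∞ then det G ≡ 1. -/

import Mathlib

open Complex Matrix Filter Topology

/-- `N` is a strictly lower or strictly upper triangular 2×2 matrix. -/
def StrictlyTriangular (N : Matrix (Fin 2) (Fin 2) ℂ) : Prop :=
  N 0 0 = 0 ∧ N 1 1 = 0 ∧ (N 0 1 = 0 ∨ N 1 0 = 0)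

/-- At `p`, `G` has (at worst) a simple pole whose residue satisfies
`Res_p G = lim_{z→p} G(z)·N`; equivalently `G(z)(I + (z-p)⁻¹ N)` with
nilpotent `N` of the opposite column extends analytically, i.e. `G` factors
as `H(z)·(I + (z-p)⁻¹ N)` with `H` analytic near `p`. -/
def SimplePoleResidueRel (G : ℂ → Matrix (Fin 2) (Fin 2) ℂ) (p : ℂ)
    (N : Matrix (Fin 2) (Fin 2) ℂ) : Prop :=
  ∃ U ∈ 𝓝 p, ∃ H : ℂ → Matrix (Fin 2) (Fin 2) ℂ,
    (∀ i j : Fin 2, DifferentiableOn ℂ (fun z => H z i j) U) ∧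
    ∀ z ∈ U, z ≠ p → G z = H z * (1 + (z - p)⁻¹ • N)

section MoreraAux
open intervalIntegral Set


/-- Boundary integral of `f` over the rectangle `[a,b] × [c,d]`. -/
noncomputable def rectInt (f : ℂ → ℂ) (a b c d : ℝ) : ℂ :=
  (∫ x : ℝ in a..b, f (x + c * I)) - (∫ x : ℝ in a..b, f (x + d * I)) +
    I • (∫ y : ℝ in c..d, f (b + y * I)) - I • ∫ y : ℝ in c..d, f (a + y * I)

lemma rectInt_zero_of_half {f : ℂ → ℂ} (hc : Continuous f)
    (hd : ∀ z : ℂ, z.im ≠ 0 → DifferentiableAt ℂ f z) (a b c : ℝ) :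
    rectInt f a b c 0 = 0 := by
  have := Complex.integral_boundary_rect_eq_zero_of_continuousOn_of_differentiableOn f
    (a + c * I) (b + (0:ℝ) * I) (hc.continuousOn) ?_
  · simpa [rectInt] using this
  · intro z hz
    refine (hd z ?_).differentiableWithinAt
    have h1 : z.im ∈ Ioo (min ((a:ℂ)+c*I).im ((b:ℂ)+(0:ℝ)*I).im)
        (max ((a:ℂ)+c*I).im ((b:ℂ)+(0:ℝ)*I).im) := hz.2
    simp only [Complex.add_im, Complex.ofReal_im, Complex.mul_im, Complex.ofReal_re,
      Complex.I_im, Complex.I_re, mul_zero, mul_one, zero_add, zero_mul, add_zero] at h1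
    rcases le_or_gt c 0 with h | h
    · have : z.im < 0 := lt_of_lt_of_le h1.2 (by simp [max_eq_right h])
      exact this.ne
    · have : 0 < z.im := lt_of_le_of_lt (by simp [min_eq_right h.le]) h1.1
      exact this.ne'

lemma rectInt_zero {f : ℂ → ℂ} (hc : Continuous f)
    (hd : ∀ z : ℂ, z.im ≠ 0 → DifferentiableAt ℂ f z) (a b c d : ℝ) :
    rectInt f a b c d = 0 := by
  have h1 : rectInt f a b c 0 = 0 := rectInt_zero_of_half hc hd a b c
  have h2 : rectInt f a b 0 d = 0 := by
    have := Complex.integral_boundary_rect_eq_zero_of_continuousOn_of_differentiableOn f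
      (a + (0:ℝ) * I) (b + d * I) (hc.continuousOn) ?_
    · simpa [rectInt] using this
    · intro z hz
      refine (hd z ?_).differentiableWithinAt
      have h1 : z.im ∈ Ioo (min ((a:ℂ)+(0:ℝ)*I).im ((b:ℂ)+d*I).im)
          (max ((a:ℂ)+(0:ℝ)*I).im ((b:ℂ)+d*I).im) := hz.2
      simp only [Complex.add_im, Complex.ofReal_im, Complex.mul_im, Complex.ofReal_re,
        Complex.I_im, Complex.I_re, mul_zero, mul_one, zero_add, zero_mul, add_zero] at h1
      rcases le_or_gt d 0 with h | h
      · have : z.im < 0 := lt_of_lt_of_le h1.2 (by simp [max_eq_left h])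
        exact this.ne
      · have : 0 < z.im := lt_of_le_of_lt (by simp [min_eq_left h.le]) h1.1
        exact this.ne'
  have key : rectInt f a b c d = rectInt f a b c 0 + rectInt f a b 0 d := by
    have ib : IntervalIntegrable (fun y : ℝ => f (b + y * I)) MeasureTheory.volume c 0 ∧
        IntervalIntegrable (fun y : ℝ => f (b + y * I)) MeasureTheory.volume 0 d := by
      constructor <;> exact (hc.comp (by continuity)).intervalIntegrable _ _
    have ia : IntervalIntegrable (fun y : ℝ => f (a + y * I)) MeasureTheory.volume c 0 ∧
        IntervalIntegrable (fun y : ℝ => f (a + y * I)) MeasureTheory.volume 0 d := by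
      constructor <;> exact (hc.comp (by continuity)).intervalIntegrable _ _
    have hb := intervalIntegral.integral_add_adjacent_intervals ib.1 ib.2
    have ha := intervalIntegral.integral_add_adjacent_intervals ia.1 ia.2
    simp only [rectInt, ← hb, ← ha]
    ring_nf
    ring
  rw [key, h1, h2, add_zero]

noncomputable def primF (f : ℂ → ℂ) (z : ℂ) : ℂ :=
  (∫ t : ℝ in (0:ℝ)..z.re, f (t + (0:ℝ) * I)) + I • ∫ s : ℝ in (0:ℝ)..z.im, f (z.re + s * I)

lemma primF_sub {f : ℂ → ℂ} (hc : Continuous f)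
    (hd : ∀ z : ℂ, z.im ≠ 0 → DifferentiableAt ℂ f z) (z w : ℂ) :
    primF f w - primF f z =
      (∫ t : ℝ in z.re..w.re, f (t + z.im * I)) +
        I • ∫ s : ℝ in z.im..w.im, f (w.re + s * I) := by
  have key := rectInt_zero hc hd z.re w.re 0 z.im
  have iint : ∀ (g : ℝ → ℂ), Continuous g → ∀ a b : ℝ,
      IntervalIntegrable g MeasureTheory.volume a b :=
    fun g hg a b => hg.intervalIntegrable a b
  have h1 : (∫ t : ℝ in (0:ℝ)..z.re, f (t + (0:ℝ)*I)) +
      (∫ t : ℝ in z.re..w.re, f (t + (0:ℝ)*I)) = ∫ t : ℝ in (0:ℝ)..w.re, f (t + (0:ℝ)*I) :=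
    intervalIntegral.integral_add_adjacent_intervals
      (iint _ (hc.comp (by continuity)) _ _) (iint _ (hc.comp (by continuity)) _ _)
  have h2 : (∫ s : ℝ in (0:ℝ)..z.im, f (w.re + s*I)) +
      (∫ s : ℝ in z.im..w.im, f (w.re + s*I)) = ∫ s : ℝ in (0:ℝ)..w.im, f (w.re + s*I) :=
    intervalIntegral.integral_add_adjacent_intervals
      (iint _ (hc.comp (by continuity)) _ _) (iint _ (hc.comp (by continuity)) _ _)
  simp only [rectInt, smul_eq_mul] at key
  simp only [primF, smul_eq_mul]
  linear_combination key - h1 - I * h2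

lemma entire_of_continuous_of_diff_off_real {f : ℂ → ℂ} (hc : Continuous f)
    (hd : ∀ z : ℂ, z.im ≠ 0 → DifferentiableAt ℂ f z) : Differentiable ℂ f := by
  have hder : ∀ z : ℂ, HasDerivAt (primF f) (f z) z := by
    intro z
    rw [hasDerivAt_iff_isLittleO]
    rw [Asymptotics.isLittleO_iff]
    intro c hcpos
    -- continuity of f at z
    have hcf : ∀ᶠ ζ in 𝓝 z, ‖f ζ - f z‖ ≤ c / 2 := by
      have := (hc.tendsto z).eventually (Metric.closedBall_mem_nhds (f z) (by positivity : (0:ℝ) < c/2))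
      filter_upwards [this] with ζ hζ
      simpa [dist_eq_norm] using hζ
    rcases Metric.eventually_nhds_iff.1 hcf with ⟨δ, hδpos, hδ⟩
    have hball : Metric.ball z (δ/2) ∈ 𝓝 z := Metric.ball_mem_nhds z (by positivity)
    filter_upwards [hball] with w hw
    have hwz : ‖w - z‖ < δ / 2 := by simpa [dist_eq_norm] using hw
    have hre : |w.re - z.re| ≤ ‖w - z‖ := by
      simpa using Complex.abs_re_le_norm (w - z)
    have him : |w.im - z.im| ≤ ‖w - z‖ := by
      simpa using Complex.abs_im_le_norm (w - z)
    have key := primF_sub hc hd z w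
    have int1 : IntervalIntegrable (fun t : ℝ => f (t + z.im * I))
        MeasureTheory.volume z.re w.re := (hc.comp (by continuity)).intervalIntegrable _ _
    have int2 : IntervalIntegrable (fun s : ℝ => f (w.re + s * I))
        MeasureTheory.volume z.im w.im := (hc.comp (by continuity)).intervalIntegrable _ _
    have split1 : (∫ t : ℝ in z.re..w.re, (f (t + z.im * I) - f z)) =
        (∫ t : ℝ in z.re..w.re, f (t + z.im * I)) - (w.re - z.re) • f z := by
      rw [intervalIntegral.integral_sub int1 intervalIntegrable_const]
      simp
    have split2 : (∫ s : ℝ in z.im..w.im, (f (w.re + s * I) - f z)) =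
        (∫ s : ℝ in z.im..w.im, f (w.re + s * I)) - (w.im - z.im) • f z := by
      rw [intervalIntegral.integral_sub int2 intervalIntegrable_const]
      simp
    have wz : ((w.re - z.re : ℝ) : ℂ) + I * ((w.im - z.im : ℝ) : ℂ) = w - z := by
      rw [← Complex.re_add_im w, ← Complex.re_add_im z]
      push_cast
      simp only [Complex.add_re, Complex.add_im, Complex.ofReal_re, Complex.mul_re,
        Complex.mul_im, Complex.I_re, Complex.I_im, Complex.ofReal_im]
      ring_nf
    have main : primF f w - primF f z - (w - z) • f z =
        (∫ t : ℝ in z.re..w.re, (f (t + z.im * I) - f z)) +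
          I • ∫ s : ℝ in z.im..w.im, (f (w.re + s * I) - f z) := by
      rw [key, split1, split2]
      simp only [smul_eq_mul, Complex.real_smul, ← wz]
      push_cast
      ring
    rw [main]
    have hptest : ∀ ζ : ℂ, ‖ζ - z‖ < δ → ‖f ζ - f z‖ ≤ c / 2 := by
      intro ζ hζ
      exact hδ (by simpa [dist_eq_norm] using hζ)
    have est1 : ‖∫ t : ℝ in z.re..w.re, (f (t + z.im * I) - f z)‖ ≤ (c/2) * |w.re - z.re| := by
      have := intervalIntegral.norm_integral_le_of_norm_le_const (C := c/2)
        (f := fun t : ℝ => f (t + z.im * I) - f z) (a := z.re) (b := w.re) ?_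
      · simpa [abs_sub_comm] using this
      · intro t ht
        apply hptest
        have h1 : ((t:ℂ) + z.im * I) - z = ((t - z.re : ℝ) : ℂ) := by
          apply Complex.ext <;> simp
        rw [h1, Complex.norm_real]
        have ht' : |t - z.re| ≤ |w.re - z.re| := by
          rcases Set.mem_uIoc.1 ht with h | h
          · rw [abs_of_pos (by linarith [h.1]), abs_of_pos (by linarith [h.1, h.2])]
            linarith [h.2]
          · rw [abs_of_nonpos (by linarith [h.2]), abs_of_neg (by linarith [h.1, h.2])]
            linarith [h.1]
        calc |t - z.re| ≤ |w.re - z.re| := ht'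
          _ ≤ ‖w - z‖ := hre
          _ < δ := by linarith
    have est2 : ‖∫ s : ℝ in z.im..w.im, (f (w.re + s * I) - f z)‖ ≤ (c/2) * |w.im - z.im| := by
      have := intervalIntegral.norm_integral_le_of_norm_le_const (C := c/2)
        (f := fun s : ℝ => f (w.re + s * I) - f z) (a := z.im) (b := w.im) ?_
      · simpa [abs_sub_comm] using this
      · intro s hs
        apply hptest
        have h1 : ((w.re:ℂ) + s * I) - z = ((w.re - z.re : ℝ) : ℂ) + ((s - z.im : ℝ) : ℂ) * I := by
          apply Complex.ext <;> simp
        rw [h1]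
        have hs' : |s - z.im| ≤ |w.im - z.im| := by
          rcases Set.mem_uIoc.1 hs with h | h
          · rw [abs_of_pos (by linarith [h.1]), abs_of_pos (by linarith [h.1, h.2])]
            linarith [h.2]
          · rw [abs_of_nonpos (by linarith [h.2]), abs_of_neg (by linarith [h.1, h.2])]
            linarith [h.1]
        calc ‖((w.re - z.re : ℝ) : ℂ) + ((s - z.im : ℝ) : ℂ) * I‖
            ≤ ‖((w.re - z.re : ℝ) : ℂ)‖ + ‖((s - z.im : ℝ) : ℂ) * I‖ := norm_add_le _ _
          _ = |w.re - z.re| + |s - z.im| := by simp [← Complex.ofReal_sub, Complex.norm_real]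
          _ < δ := by linarith [hre, hs', him]
    calc ‖(∫ t : ℝ in z.re..w.re, (f (t + z.im * I) - f z)) +
          I • ∫ s : ℝ in z.im..w.im, (f (w.re + s * I) - f z)‖
        ≤ ‖∫ t : ℝ in z.re..w.re, (f (t + z.im * I) - f z)‖ +
          ‖I • ∫ s : ℝ in z.im..w.im, (f (w.re + s * I) - f z)‖ := norm_add_le _ _
      _ ≤ (c/2) * |w.re - z.re| + (c/2) * |w.im - z.im| := by
          rw [norm_smul, Complex.norm_I, one_mul]
          exact add_le_add est1 est2
      _ ≤ (c/2) * ‖w - z‖ + (c/2) * ‖w - z‖ := by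
          nlinarith [norm_nonneg (w - z), hcpos, hre, him]
      _ = c * ‖w - z‖ := by ring
  have hF : Differentiable ℂ (primF f) := fun z => (hder z).differentiableAt
  have hfd : f = deriv (primF f) := by
    funext z
    exact ((hder z).deriv).symm
  rw [hfd]
  have : AnalyticOnNhd ℂ (deriv (primF f)) Set.univ :=
    (analyticOnNhd_univ_iff_differentiable.2 hF).deriv
  exact fun z => (this z trivial).differentiableAt

end MoreraAux

section MainProof
open Matrix Metric Bornology

/-- Determinant lemma for the Riemann–Hilbert problem: if `G` is analytic
off `ℝ ∪ P` with only simple poles at `P` satisfying the nilpotent residue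
relations, and extends continuously to `ℝ` with trivial jump, then `det G`
extends to an entire function, which is identically `1` whenever
`G(z) → I` as `z → ∞`. -/
theorem det_extends_entire_and_eq_one
    (P : Finset ℂ) (hP : ∀ p ∈ P, p.im ≠ 0)
    (G : ℂ → Matrix (Fin 2) (Fin 2) ℂ)
    (hAnal : ∀ i j : Fin 2,
      DifferentiableOn ℂ (fun z => G z i j) {z : ℂ | z.im ≠ 0 ∧ z ∉ P})
    (hRes : ∀ p ∈ P, ∃ N : Matrix (Fin 2) (Fin 2) ℂ,
      StrictlyTriangular N ∧ SimplePoleResidueRel G p N)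
    (hBdry : ∃ Gb : ℝ → Matrix (Fin 2) (Fin 2) ℂ, ∀ x : ℝ,
      Tendsto G (nhdsWithin (x : ℂ) {z : ℂ | z.im ≠ 0}) (nhds (Gb x))) :
    ∃ F : ℂ → ℂ, Differentiable ℂ F ∧
      (∀ z : ℂ, z.im ≠ 0 → z ∉ P → F z = (G z).det) ∧
      (Tendsto G (cocompact ℂ) (nhds (1 : Matrix (Fin 2) (Fin 2) ℂ)) →
        ∀ z : ℂ, F z = 1) := by
  classical
  obtain ⟨Gb, hGb⟩ := hBdry
  simp only [SimplePoleResidueRel] at hRes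
  choose N hTri U hU H hHd hGH using hRes
  have hO1 : IsOpen {z : ℂ | z.im ≠ 0} := isOpen_compl_singleton.preimage Complex.continuous_im
  have hOP : IsOpen ((↑P : Set ℂ))ᶜ := P.finite_toSet.isClosed.isOpen_compl
  have hSopen : IsOpen {z : ℂ | z.im ≠ 0 ∧ z ∉ P} := by
    have h : {z : ℂ | z.im ≠ 0 ∧ z ∉ P} = {z : ℂ | z.im ≠ 0} ∩ (↑P : Set ℂ)ᶜ := rfl
    rw [h]; exact hO1.inter hOP
  have hdet_cont : Continuous fun M : Matrix (Fin 2) (Fin 2) ℂ => M.det := by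
    have h : ∀ i j : Fin 2, Continuous fun M : Matrix (Fin 2) (Fin 2) ℂ => M i j :=
      fun i j => (continuous_apply j).comp (continuous_apply i)
    simp only [Matrix.det_fin_two]
    fun_prop
  have hdetG : DifferentiableOn ℂ (fun z => (G z).det) {z : ℂ | z.im ≠ 0 ∧ z ∉ P} := by
    have h : (fun z => (G z).det) =
        fun z => G z 0 0 * G z 1 1 - G z 0 1 * G z 1 0 := funext fun z => Matrix.det_fin_two _
    rw [h]
    exact ((hAnal 0 0).mul (hAnal 1 1)).sub ((hAnal 0 1).mul (hAnal 1 0))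
  have hdet_one : ∀ p (hp : p ∈ P) (c : ℂ), (1 + c • N p hp).det = 1 := by
    intro p hp c
    obtain ⟨h00, h11, h01⟩ := hTri p hp
    rcases h01 with h | h <;>
      simp [Matrix.det_fin_two, Matrix.add_apply, Matrix.smul_apply, Matrix.one_apply,
        h00, h11, h]
  set F₁ : ℂ → ℂ := fun z => if hz : z ∈ P then ((H z hz) z).det else (G z).det with hF₁def
  have hF₁ : ∀ z : ℂ, z.im ≠ 0 → DifferentiableAt ℂ F₁ z := by
    intro z hzim
    by_cases hzP : z ∈ P
    · have hdetH : DifferentiableOn ℂ (fun w => ((H z hzP) w).det) (U z hzP) := by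
        have h : (fun w => ((H z hzP) w).det) =
            fun w => H z hzP w 0 0 * H z hzP w 1 1 - H z hzP w 0 1 * H z hzP w 1 0 :=
          funext fun w => Matrix.det_fin_two _
        rw [h]
        exact ((hHd z hzP 0 0).mul (hHd z hzP 1 1)).sub ((hHd z hzP 0 1).mul (hHd z hzP 1 0))
      have hdAt : DifferentiableAt ℂ (fun w => ((H z hzP) w).det) z :=
        hdetH.differentiableAt (hU z hzP)
      have hV : (interior (U z hzP) ∩ ((↑(P.erase z) : Set ℂ))ᶜ) ∈ 𝓝 z := by
        refine Filter.inter_mem (interior_mem_nhds.2 (hU z hzP)) ?_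
        refine ((P.erase z).finite_toSet.isClosed.isOpen_compl).mem_nhds ?_
        simp
      have heq : F₁ =ᶠ[𝓝 z] fun w => ((H z hzP) w).det := by
        filter_upwards [hV] with w hw
        rcases eq_or_ne w z with rfl | hne
        · simp only [hF₁def, dif_pos hzP]
        · have hwP : w ∉ P := by
            intro hwP
            exact (hw.2 (by simp [Finset.mem_erase, hne, hwP] : w ∈ (↑(P.erase z) : Set ℂ))).elim
          have hGw : G w = H z hzP w * (1 + (w - z)⁻¹ • N z hzP) :=
            hGH z hzP w (interior_subset hw.1) hne
          simp only [hF₁def, dif_neg hwP]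
          rw [hGw, Matrix.det_mul, hdet_one z hzP, mul_one]
      exact heq.differentiableAt_iff.2 hdAt
    · have hmem : {w : ℂ | w.im ≠ 0 ∧ w ∉ P} ∈ 𝓝 z := hSopen.mem_nhds ⟨hzim, hzP⟩
      have heq : F₁ =ᶠ[𝓝 z] fun w => (G w).det :=
        Filter.eventuallyEq_of_mem hmem fun w hw => dif_neg hw.2
      exact heq.differentiableAt_iff.2 (hdetG.differentiableAt hmem)
  set F₂ : ℂ → ℂ := fun z => if z.im = 0 then (Gb z.re).det else F₁ z with hF₂def
  have hNB : ∀ x : ℂ, (𝓝[{z : ℂ | z.im ≠ 0}] x).NeBot := by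
    intro x
    rw [← mem_closure_iff_nhdsWithin_neBot]
    by_cases h : x.im = 0
    · have hc : Continuous fun ε : ℝ => x + (ε : ℂ) * I := by continuity
      have ht : Tendsto (fun ε : ℝ => x + (ε : ℂ) * I) (𝓝[>] 0) (𝓝 x) := by
        have := hc.tendsto 0
        simp only [Complex.ofReal_zero, zero_mul, add_zero] at this
        exact this.mono_left nhdsWithin_le_nhds
      refine mem_closure_of_tendsto ht ?_
      filter_upwards [self_mem_nhdsWithin] with ε hε
      simp only [Set.mem_setOf_eq, Complex.add_im, Complex.mul_im, Complex.ofReal_re,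
        Complex.I_im, Complex.ofReal_im, Complex.I_re, mul_zero, mul_one, add_zero, zero_add, h]
      exact ne_of_gt hε
    · exact subset_closure h
  have hGbdet : ∀ x : ℝ, Tendsto (fun ζ => (G ζ).det)
      (𝓝[{z : ℂ | z.im ≠ 0}] (x : ℂ)) (𝓝 ((Gb x).det)) :=
    fun x => (hdet_cont.tendsto _).comp (hGb x)
  have hF₂eq : ∀ z : ℂ, z.im ≠ 0 → z ∉ P → F₂ z = (G z).det := by
    intro z h1 h2
    simp only [hF₂def, if_neg h1, hF₁def, dif_neg h2]
  have hF₂diff : ∀ z : ℂ, z.im ≠ 0 → DifferentiableAt ℂ F₂ z := by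
    intro z hzim
    have hmem : {w : ℂ | w.im ≠ 0} ∈ 𝓝 z := hO1.mem_nhds hzim
    have heq : F₂ =ᶠ[𝓝 z] F₁ :=
      Filter.eventuallyEq_of_mem hmem fun w hw => if_neg hw
    exact heq.differentiableAt_iff.2 (hF₁ z hzim)
  have hF₂cont : Continuous F₂ := by
    rw [continuous_iff_continuousAt]
    intro z
    by_cases hzim : z.im = 0
    · rw [Metric.continuousAt_iff]
      intro ε hε
      have hzre : (z.re : ℂ) = z := by
        apply Complex.ext <;> simp [hzim]
      have h1 := hGbdet z.re
      rw [hzre, Metric.tendsto_nhdsWithin_nhds] at h1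
      obtain ⟨δ₁, hδ₁, hδ₁'⟩ := h1 (ε / 2) (by positivity)
      have hzP : z ∉ P := fun h => hP z h hzim
      obtain ⟨δ₂, hδ₂, hδ₂'⟩ := Metric.isOpen_iff.1 hOP z hzP
      refine ⟨min δ₁ δ₂, by positivity, ?_⟩
      intro w hw
      have hwδ₁ : dist w z < δ₁ := lt_of_lt_of_le hw (min_le_left _ _)
      have hwδ₂ : dist w z < δ₂ := lt_of_lt_of_le hw (min_le_right _ _)
      have hFz : F₂ z = (Gb z.re).det := by simp only [hF₂def, if_pos hzim]
      by_cases hwim : w.im = 0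
      · have hFw : F₂ w = (Gb w.re).det := by simp only [hF₂def, if_pos hwim]
        rw [hFw, hFz]
        have hwre : (w.re : ℂ) = w := by apply Complex.ext <;> simp [hwim]
        have h2 := hGbdet w.re
        rw [hwre] at h2
        have hball : Metric.ball z (min δ₁ δ₂) ∈ 𝓝 w :=
          Metric.isOpen_ball.mem_nhds (by simpa [Metric.mem_ball] using hw)
        have hev : ∀ᶠ ζ in 𝓝[{z : ℂ | z.im ≠ 0}] w,
            dist ((G ζ).det) ((Gb z.re).det) ≤ ε / 2 := by
          filter_upwards [mem_nhdsWithin_of_mem_nhds hball, self_mem_nhdsWithin] with ζ hζ hζ'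
          have hζz : dist ζ z < δ₁ :=
            lt_of_lt_of_le (by simpa [Metric.mem_ball] using hζ) (min_le_left _ _)
          exact le_of_lt (hδ₁' hζ' hζz)
        haveI := hNB w
        have hle := le_of_tendsto (h2.dist (tendsto_const_nhds (x := (Gb z.re).det))) hev
        exact lt_of_le_of_lt hle (by linarith)
      · have hwP : w ∉ P := hδ₂' (by simpa [Metric.mem_ball] using hwδ₂)
        have hFw : F₂ w = (G w).det := hF₂eq w hwim hwP
        rw [hFw, hFz]
        exact lt_of_lt_of_le (hδ₁' hwim hwδ₁) (by linarith)
    · have hmem : {w : ℂ | w.im ≠ 0} ∈ 𝓝 z := hO1.mem_nhds hzim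
      have heq : F₂ =ᶠ[𝓝 z] F₁ :=
        Filter.eventuallyEq_of_mem hmem fun w hw => if_neg hw
      exact (continuousAt_congr heq).2 (hF₁ z hzim).continuousAt
  have hF₂entire : Differentiable ℂ F₂ :=
    entire_of_continuous_of_diff_off_real hF₂cont hF₂diff
  refine ⟨F₂, hF₂entire, hF₂eq, ?_⟩
  intro hT z
  have hdetT : Tendsto (fun ζ => (G ζ).det) (cocompact ℂ) (𝓝 1) := by
    have h := (hdet_cont.tendsto (1 : Matrix (Fin 2) (Fin 2) ℂ)).comp hT
    simpa [Function.comp_def] using h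
  have hF₂T : Tendsto F₂ (cocompact ℂ) (𝓝 1) := by
    rw [Metric.tendsto_nhds]
    intro ε hε
    obtain ⟨K, hK, hKsub⟩ := Filter.mem_cocompact.1
      ((Metric.tendsto_nhds.1 hdetT) (ε / 2) (by positivity))
    obtain ⟨R₁, hR₁⟩ := hK.isBounded.subset_closedBall 0
    obtain ⟨R₂, hR₂⟩ := P.finite_toSet.isBounded.subset_closedBall 0
    set R := max (max R₁ R₂) 0 + 1 with hRdef
    have hRout : ∀ ζ : ℂ, R - 1 < ‖ζ‖ → dist ((G ζ).det) 1 < ε / 2 := by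
      intro ζ hζ
      apply hKsub
      intro hζK
      have h := hR₁ hζK
      rw [Metric.mem_closedBall, dist_zero_right] at h
      have : R - 1 = max (max R₁ R₂) 0 := by rw [hRdef]; ring
      rw [this] at hζ
      have : R₁ ≤ max (max R₁ R₂) 0 := le_max_of_le_left (le_max_left _ _)
      linarith
    rw [Filter.eventually_iff, Filter.mem_cocompact]
    refine ⟨Metric.closedBall 0 R, isCompact_closedBall _ _, ?_⟩
    intro w hw
    have hwnorm : R < ‖w‖ := by
      by_contra hcon
      exact hw (by rw [Metric.mem_closedBall, dist_zero_right]; linarith)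
    have hR0 : (0:ℝ) < R := by
      have : (0:ℝ) ≤ max (max R₁ R₂) 0 := le_max_right _ _
      rw [hRdef]; linarith
    simp only [Set.mem_setOf_eq]
    by_cases hwim : w.im = 0
    · have hwre : (w.re : ℂ) = w := by apply Complex.ext <;> simp [hwim]
      have h2 := hGbdet w.re
      rw [hwre] at h2
      have hev : ∀ᶠ ζ in 𝓝[{z : ℂ | z.im ≠ 0}] w, dist ((G ζ).det) 1 ≤ ε / 2 := by
        have hball : Metric.ball w 1 ∈ 𝓝 w := Metric.ball_mem_nhds w one_pos
        filter_upwards [mem_nhdsWithin_of_mem_nhds hball] with ζ hζ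
        refine le_of_lt (hRout ζ ?_)
        have hd : dist ζ w < 1 := by simpa [Metric.mem_ball] using hζ
        have h3 : ‖w‖ - ‖ζ‖ ≤ dist ζ w := by
          rw [dist_eq_norm]
          calc ‖w‖ - ‖ζ‖ ≤ ‖w - ζ‖ := by
                have := norm_sub_norm_le w ζ
                linarith
            _ = ‖ζ - w‖ := by rw [norm_sub_rev]
        linarith
      haveI := hNB w
      have hle := le_of_tendsto (h2.dist (tendsto_const_nhds (x := (1:ℂ)))) hev
      have hFw : F₂ w = (Gb w.re).det := by simp only [hF₂def, if_pos hwim]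
      rw [hFw]
      linarith
    · have hwP : w ∉ P := by
        intro h
        have := hR₂ h
        rw [Metric.mem_closedBall, dist_zero_right] at this
        have h4 : R₂ ≤ max (max R₁ R₂) 0 := le_max_of_le_left (le_max_right _ _)
        have : R - 1 = max (max R₁ R₂) 0 := by rw [hRdef]; ring
        linarith
      rw [hF₂eq w hwim hwP]
      exact lt_of_lt_of_le (hRout w (by linarith)) (by linarith)
  obtain ⟨K, hK, hKsub⟩ := Filter.mem_cocompact.1 ((Metric.tendsto_nhds.1 hF₂T) 1 one_pos)
  have hb : IsBounded (Set.range F₂) := by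
    have hsub : Set.range F₂ ⊆ F₂ '' K ∪ Metric.ball 1 1 := by
      rintro _ ⟨w, rfl⟩
      by_cases hwK : w ∈ K
      · exact Or.inl ⟨w, hwK, rfl⟩
      · exact Or.inr (by simpa [Metric.mem_ball] using hKsub hwK)
    exact (((hK.image hF₂cont).isBounded).union Metric.isBounded_ball).subset hsub
  have hconst := hF₂entire.apply_eq_apply_of_bounded hb
  have hcT : Tendsto F₂ (cocompact ℂ) (𝓝 (F₂ z)) := by
    have h : F₂ = fun _ => F₂ z := funext fun w => hconst w z
    rw [h]
    exact tendsto_const_nhds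
  exact tendsto_nhds_unique hcT hF₂T

end MainProof
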